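/- Suppose T_rep = k0 * T_pil for some positive integer k0 ≤ N_p, and T_ofdm < T_pil. Then the set of offsets t ∈ [0, T_rep) for which at least one pilot interval [k*T_pil, k*T_pil + T_ofdm] (k = 0,...,N_p-1) contains some radar arrival t + j*T_rep (j ∈ ℕ) has Lebesgue measure exactly k0 * T_ofdm; equivalently, the probability of at least one pilot interference equals T_ofdm / T_pil. -/

import Mathlib

open MeasureTheory Set

theorem stmt3
    (T_ofdm T_pil T_rep : ℝ) (N_p k0 : ℕ)
    (hofdm : 0 < T_ofdm) (hop : T_ofdm < T_pil)
    (hk0 : 0 < k0) (hk0Np : k0 ≤ N_p)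
    (hrep : T_rep = k0 * T_pil) :
    volume {t ∈ Ico (0:ℝ) T_rep |
        ∃ j : ℕ, ∃ k : ℕ, k < N_p ∧
          t + j * T_rep ∈ Icc ((k:ℝ) * T_pil) ((k:ℝ) * T_pil + T_ofdm)}
      = ENNReal.ofReal (k0 * T_ofdm)
    ∧
    (volume {t ∈ Ico (0:ℝ) T_rep |
        ∃ j : ℕ, ∃ k : ℕ, k < N_p ∧
          t + j * T_rep ∈ Icc ((k:ℝ) * T_pil) ((k:ℝ) * T_pil + T_ofdm)}).toReal / T_rep
      = T_ofdm / T_pil := by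
  have hpil : 0 < T_pil := hofdm.trans hop
  have hk0R : (0:ℝ) < k0 := by exact_mod_cast hk0
  have hset : {t ∈ Ico (0:ℝ) T_rep |
        ∃ j : ℕ, ∃ k : ℕ, k < N_p ∧
          t + j * T_rep ∈ Icc ((k:ℝ) * T_pil) ((k:ℝ) * T_pil + T_ofdm)}
      = ⋃ m ∈ Finset.range k0, Icc ((m:ℝ) * T_pil) ((m:ℝ) * T_pil + T_ofdm) := by
    ext t
    simp only [mem_sep_iff, mem_Ico, Finset.mem_range, mem_iUnion, mem_Icc, exists_prop]
    constructor
    · rintro ⟨⟨ht0, htr⟩, j, k, hk, h1, h2⟩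
      rw [hrep] at h1 h2 htr
      have hA : ((j:ℝ) * k0) < k + 1 := by nlinarith
      have hB : ((k:ℝ)) < (j:ℝ) * k0 + k0 := by nlinarith
      have hjk : j * k0 ≤ k := by
        have : j * k0 < k + 1 := by exact_mod_cast hA
        omega
      have hkb : k < j * k0 + k0 := by exact_mod_cast hB
      refine ⟨k - j * k0, by omega, ?_, ?_⟩
      · have : ((k - j * k0 : ℕ) : ℝ) = (k:ℝ) - (j:ℝ) * k0 := by
          push_cast [Nat.cast_sub hjk]; ring
        rw [this]; nlinarith
      · have : ((k - j * k0 : ℕ) : ℝ) = (k:ℝ) - (j:ℝ) * k0 := by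
          push_cast [Nat.cast_sub hjk]; ring
        rw [this]; nlinarith
    · rintro ⟨m, hm, h1, h2⟩
      have hmR : ((m:ℝ)) + 1 ≤ k0 := by exact_mod_cast hm
      refine ⟨⟨by nlinarith, by rw [hrep]; nlinarith⟩, 0, m, by omega, ?_, ?_⟩
      · simpa using h1
      · simpa using h2
  have hdisj : ((Finset.range k0 : Finset ℕ) : Set ℕ).PairwiseDisjoint
      (fun m : ℕ => Icc ((m:ℝ) * T_pil) ((m:ℝ) * T_pil + T_ofdm)) := by
    intro i _ j _ hij
    simp only [Function.onFun]
    rcases hij.lt_or_gt with h | h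
    · have : ((i:ℝ) + 1) ≤ j := by exact_mod_cast h
      rw [Set.disjoint_left]
      intro s hs1 hs2
      simp only [mem_Icc] at hs1 hs2
      nlinarith
    · have : ((j:ℝ) + 1) ≤ i := by exact_mod_cast h
      rw [Set.disjoint_left]
      intro s hs1 hs2
      simp only [mem_Icc] at hs1 hs2
      nlinarith
  have hvol : volume (⋃ m ∈ Finset.range k0,
      Icc ((m:ℝ) * T_pil) ((m:ℝ) * T_pil + T_ofdm)) = ENNReal.ofReal (k0 * T_ofdm) := by
    rw [measure_biUnion_finset hdisj (fun i _ => measurableSet_Icc)]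
    simp only [Real.volume_Icc, add_sub_cancel_left]
    rw [Finset.sum_const, Finset.card_range, nsmul_eq_mul,
      ← ENNReal.ofReal_natCast, ← ENNReal.ofReal_mul (by positivity)]
  have hmain : volume {t ∈ Ico (0:ℝ) T_rep |
        ∃ j : ℕ, ∃ k : ℕ, k < N_p ∧
          t + j * T_rep ∈ Icc ((k:ℝ) * T_pil) ((k:ℝ) * T_pil + T_ofdm)}
      = ENNReal.ofReal (k0 * T_ofdm) := by rw [hset]; exact hvol
  refine ⟨hmain, ?_⟩
  rw [hmain, ENNReal.toReal_ofReal (by positivity), hrep,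
    mul_div_mul_left _ _ (ne_of_gt hk0R)]
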